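/- Let ω_ext = H_S(q,p,t) dt + (2/3)(p dq - (1/2)q dp - 2t(tq + 2q³) dq + (t/2) p dp) viewed as a 1-form in variables (t, s₁, s₂) where q = q(t;s₁,s₂), p = p(t;s₁,s₂) with H_S(q,p,t) = p²/4 - tq² - q⁴, and where d acts only in s₁,s₂ directions on q,p in the non-dt terms. Then ω_ext - (p dq - H_S dt) = (1/3) d(2t H_S(q,p,t) - pq), i.e. the extended Jimbo–Miwa–Ueno form differs from the classical action differential by the total differential of (1/3)(2tH_S - pq), provided (q,p) satisfy q_t = p/2, p_t = 2tq + 4q³. -/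

import Mathlib

/-- The soft-edge Hamiltonian `H_S(q,p,t) = p²/4 - tq² - q⁴`. -/
noncomputable def HSext (q p t : ℝ) : ℝ := p ^ 2 / 4 - t * q ^ 2 - q ^ 4

private lemma sComp (f g : ℝ → ℝ) (x t : ℝ)
    (hf : DifferentiableAt ℝ f x) (hg : DifferentiableAt ℝ g x) :
    deriv (fun y => 2 * t * HSext (f y) (g y) t - g y * f y) x
      = t * g x * deriv g x - 4 * t ^ 2 * f x * deriv f x
        - 8 * t * (f x) ^ 3 * deriv f x - deriv g x * f x - g x * deriv f x := by
  have h : HasDerivAt (fun y => 2 * t * ((g y) ^ 2 / 4 - t * (f y) ^ 2 - (f y) ^ 4)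
      - g y * f y)
      (t * g x * deriv g x - 4 * t ^ 2 * f x * deriv f x
        - 8 * t * (f x) ^ 3 * deriv f x - deriv g x * f x - g x * deriv f x) x := by
    have hF := hf.hasDerivAt
    have hG := hg.hasDerivAt
    have := (((((hG.pow 2).div_const 4).sub
        ((hF.pow 2).const_mul t)).sub (hF.pow 4)).const_mul (2 * t)).sub (hG.mul hF)
    refine this.congr_deriv ?_
    ring
  simpa [HSext] using h.deriv

/-- with `ω_ext = H_S dt + (2/3)Σ_j (p q_{s_j} - (1/2)q p_{s_j}
- 2t(tq+2q³)q_{s_j} + (t/2)p p_{s_j}) ds_j`, one has, provided `(q,p)` satisfy the flow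
`q_t = p/2`, `p_t = 2tq + 4q³`, the identity of 1-forms
`ω_ext - (p dq - H_S dt) = (1/3) d(2t H_S - pq)`, stated componentwise in `(t,s₁,s₂)`. -/
theorem extended_form_minus_action_is_exact
    (q p : ℝ → ℝ → ℝ → ℝ)
    (hqt : ∀ t s₁ s₂ : ℝ, HasDerivAt (fun τ => q τ s₁ s₂) (p t s₁ s₂ / 2) t)
    (hpt : ∀ t s₁ s₂ : ℝ, HasDerivAt (fun τ => p τ s₁ s₂)
      (2 * t * q t s₁ s₂ + 4 * (q t s₁ s₂) ^ 3) t)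
    (hq1 : ∀ t s₁ s₂ : ℝ, DifferentiableAt ℝ (fun x => q t x s₂) s₁)
    (hp1 : ∀ t s₁ s₂ : ℝ, DifferentiableAt ℝ (fun x => p t x s₂) s₁)
    (hq2 : ∀ t s₁ s₂ : ℝ, DifferentiableAt ℝ (fun y => q t s₁ y) s₂)
    (hp2 : ∀ t s₁ s₂ : ℝ, DifferentiableAt ℝ (fun y => p t s₁ y) s₂) :
    ∀ t s₁ s₂ : ℝ,
      -- dt-component: H_S - (p q_t - H_S) = (1/3) ∂_t (2t H_S - pq)
      (HSext (q t s₁ s₂) (p t s₁ s₂) t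
          - (p t s₁ s₂ * (p t s₁ s₂ / 2) - HSext (q t s₁ s₂) (p t s₁ s₂) t)
        = (1 / 3) * deriv (fun τ => 2 * τ * HSext (q τ s₁ s₂) (p τ s₁ s₂) τ
            - p τ s₁ s₂ * q τ s₁ s₂) t) ∧
      -- ds₁-component
      ((2 / 3) * (p t s₁ s₂ * deriv (fun x => q t x s₂) s₁
            - (1 / 2) * q t s₁ s₂ * deriv (fun x => p t x s₂) s₁
            - 2 * t * (t * q t s₁ s₂ + 2 * (q t s₁ s₂) ^ 3) * deriv (fun x => q t x s₂) s₁
            + (t / 2) * p t s₁ s₂ * deriv (fun x => p t x s₂) s₁)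
          - p t s₁ s₂ * deriv (fun x => q t x s₂) s₁
        = (1 / 3) * deriv (fun x => 2 * t * HSext (q t x s₂) (p t x s₂) t
            - p t x s₂ * q t x s₂) s₁) ∧
      -- ds₂-component
      ((2 / 3) * (p t s₁ s₂ * deriv (fun y => q t s₁ y) s₂
            - (1 / 2) * q t s₁ s₂ * deriv (fun y => p t s₁ y) s₂
            - 2 * t * (t * q t s₁ s₂ + 2 * (q t s₁ s₂) ^ 3) * deriv (fun y => q t s₁ y) s₂
            + (t / 2) * p t s₁ s₂ * deriv (fun y => p t s₁ y) s₂)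
          - p t s₁ s₂ * deriv (fun y => q t s₁ y) s₂
        = (1 / 3) * deriv (fun y => 2 * t * HSext (q t s₁ y) (p t s₁ y) t
            - p t s₁ y * q t s₁ y) s₂) := by
  intro t s₁ s₂
  refine ⟨?_, ?_, ?_⟩
  · have hq := hqt t s₁ s₂
    have hp := hpt t s₁ s₂
    have h : HasDerivAt (fun τ => 2 * τ * ((p τ s₁ s₂) ^ 2 / 4 - τ * (q τ s₁ s₂) ^ 2
        - (q τ s₁ s₂) ^ 4) - p τ s₁ s₂ * q τ s₁ s₂)
        (-6 * t * (q t s₁ s₂) ^ 2 - 6 * (q t s₁ s₂) ^ 4) t := by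
      have := (((hasDerivAt_id t).const_mul 2).mul
          ((((hp.pow 2).div_const 4).sub
            ((hasDerivAt_id t).mul (hq.pow 2))).sub (hq.pow 4))).sub (hp.mul hq)
      refine this.congr_deriv ?_
      simp only [id_eq, Pi.sub_apply, Pi.mul_apply, Pi.pow_apply]
      push_cast
      ring
    have hd : deriv (fun τ => 2 * τ * HSext (q τ s₁ s₂) (p τ s₁ s₂) τ
        - p τ s₁ s₂ * q τ s₁ s₂) t = -6 * t * (q t s₁ s₂) ^ 2 - 6 * (q t s₁ s₂) ^ 4 := by
      simpa [HSext] using h.deriv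
    rw [hd]
    simp only [HSext]
    ring
  · rw [sComp _ _ _ _ (hq1 t s₁ s₂) (hp1 t s₁ s₂)]
    ring
  · rw [sComp _ _ _ _ (hq2 t s₁ s₂) (hp2 t s₁ s₂)]
    ring
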